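/- Let K ≥ 2, c : Fin K → ℝ≥0, and w : Fin K → ℝ≥0. For each permutation σ of the K users define R_σ(c) = ∑_{t=1}^{K} (w_{σ(t)} − w_{σ(t−1)}) e^{∑_{k=t}^{K} c_{σ(k)}} − w_{σ(K)} with w_{σ(0)} := 0. Let σ* be a permutation ordering users in nondecreasing order of w. Then for every permutation σ and every c ≥ 0, R_{σ*}(c) ≤ R_σ(c); consequently {c ≥ 0 : R_σ(c) ≤ p} ⊆ {c ≥ 0 : R_{σ*}(c) ≤ p} for any power budget p. -/

import Mathlib

noncomputable def prodx (l : List (ℝ × ℝ)) : ℝ := (l.map Prod.snd).prod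

noncomputable def Vl : List (ℝ × ℝ) → ℝ
  | [] => 0
  | p :: l => p.1 * (p.2 - 1) * prodx l + Vl l

lemma prodx_nil : prodx ([] : List (ℝ × ℝ)) = 1 := rfl

lemma prodx_cons (p : ℝ × ℝ) (l : List (ℝ × ℝ)) : prodx (p :: l) = p.2 * prodx l := by
  simp [prodx]

lemma prodx_perm {l l' : List (ℝ × ℝ)} (h : l.Perm l') : prodx l = prodx l' :=
  (h.map Prod.snd).prod_eq

lemma prodx_nonneg {l : List (ℝ × ℝ)} (h : ∀ p ∈ l, 1 ≤ p.2) : 0 ≤ prodx l := by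
  induction l with
  | nil => simp [prodx]
  | cons p l ih =>
      have h1 := h p (by simp)
      have h2 : 0 ≤ prodx l := ih fun q hq => h q (by simp [hq])
      rw [prodx_cons]
      exact mul_nonneg (by linarith) h2

lemma Vl_swap (p q : ℝ × ℝ) (l : List (ℝ × ℝ)) (hp : 1 ≤ p.2) (hq : 1 ≤ q.2)
    (hP : 0 ≤ prodx l) (hle : p.1 ≤ q.1) : Vl (p :: q :: l) ≤ Vl (q :: p :: l) := by
  simp only [Vl, prodx_cons]
  nlinarith [mul_nonneg (mul_nonneg (mul_nonneg (sub_nonneg.2 hp) (sub_nonneg.2 hq)) hP)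
    (sub_nonneg.2 hle)]

lemma Vl_move (p : ℝ × ℝ) (a : List (ℝ × ℝ)) (hp : 1 ≤ p.2) (ha : ∀ q ∈ a, 1 ≤ q.2) :
    ∀ b : List (ℝ × ℝ), (∀ q ∈ b, p.1 ≤ q.1 ∧ 1 ≤ q.2) →
      Vl (p :: (b ++ a)) ≤ Vl (b ++ p :: a) := by
  intro b
  induction b with
  | nil => intro _; exact le_refl _
  | cons q b ih =>
      intro hb
      have hq := hb q (by simp)
      have hba : ∀ r ∈ b ++ a, 1 ≤ r.2 := by
        intro r hr
        rcases List.mem_append.1 hr with h | h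
        · exact (hb r (by simp [h])).2
        · exact ha r h
      have step1 : Vl (p :: q :: (b ++ a)) ≤ Vl (q :: p :: (b ++ a)) :=
        Vl_swap p q (b ++ a) hp hq.2 (prodx_nonneg hba) hq.1
      have hperm : (p :: (b ++ a)).Perm (b ++ p :: a) := List.perm_middle.symm
      have step2 : Vl (q :: p :: (b ++ a)) ≤ Vl (q :: (b ++ p :: a)) := by
        show q.1 * (q.2 - 1) * prodx (p :: (b ++ a)) + Vl (p :: (b ++ a)) ≤
          q.1 * (q.2 - 1) * prodx (b ++ p :: a) + Vl (b ++ p :: a)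
        rw [prodx_perm hperm]
        exact add_le_add (le_refl _) (ih fun r hr => hb r (by simp [hr]))
      calc Vl (p :: ((q :: b) ++ a)) = Vl (p :: q :: (b ++ a)) := rfl
        _ ≤ Vl (q :: p :: (b ++ a)) := step1
        _ ≤ Vl ((q :: b) ++ p :: a) := step2

lemma Vl_sorted_le : ∀ (l₂ l₁ : List (ℝ × ℝ)), l₂.Perm l₁ →
    (∀ p ∈ l₁, 0 ≤ p.1 ∧ 1 ≤ p.2) → l₂.Pairwise (fun p q => p.1 ≤ q.1) →
    Vl l₂ ≤ Vl l₁ := by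
  intro l₂
  induction l₂ with
  | nil => intro l₁ h _ _; rw [h.nil_eq]
  | cons p t₂ ih =>
      intro l₁ h hpos hsort
      have hpmem : p ∈ l₁ := h.subset (by simp)
      obtain ⟨b, a, rfl⟩ := List.append_of_mem hpmem
      have hperm2 : (p :: t₂).Perm (p :: (b ++ a)) := h.trans List.perm_middle
      have htperm : t₂.Perm (b ++ a) := hperm2.cons_inv
      have hsort' := List.pairwise_cons.1 hsort
      have hposba : ∀ q ∈ b ++ a, 0 ≤ q.1 ∧ 1 ≤ q.2 := by
        intro q hq
        rcases List.mem_append.1 hq with h' | h'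
        · exact hpos q (by simp [h'])
        · exact hpos q (by simp [h'])
      have hihl : Vl t₂ ≤ Vl (b ++ a) := ih (b ++ a) htperm hposba hsort'.2
      have hpp := hpos p (by simp)
      have step1 : Vl (p :: t₂) ≤ Vl (p :: (b ++ a)) := by
        show p.1 * (p.2 - 1) * prodx t₂ + Vl t₂ ≤ p.1 * (p.2 - 1) * prodx (b ++ a) + Vl (b ++ a)
        rw [prodx_perm htperm]
        exact add_le_add (le_refl _) hihl
      have step2 : Vl (p :: (b ++ a)) ≤ Vl (b ++ p :: a) := by
        apply Vl_move p a hpp.2 (fun q hq => (hposba q (List.mem_append.2 (Or.inr hq))).2)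
        intro q hq
        refine ⟨hsort'.1 q (htperm.mem_iff.2 (List.mem_append.2 (Or.inl hq))), ?_⟩
        exact (hposba q (List.mem_append.2 (Or.inl hq))).2
      exact step1.trans step2

/-- Total power required under decoding order `σ` (a bijection of the user set `{1,…,K}`
with the convention `σ 0 = 0` and `w 0 = 0`). -/
noncomputable def RPerm (K : ℕ) (w c : ℕ → ℝ) (σ : ℕ → ℕ) : ℝ :=
  (∑ t ∈ Finset.Icc 1 K,
      (w (σ t) - w (σ (t - 1))) * Real.exp (∑ k ∈ Finset.Icc t K, c (σ k))) - w (σ K)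

section Bridge

variable (K : ℕ) (w c : ℕ → ℝ) (σ : ℕ → ℕ)

noncomputable def Mlist (n : ℕ) : List (ℝ × ℝ) :=
  (List.range n).map fun i => (w (σ (K + 1 - n + i)), Real.exp (c (σ (K + 1 - n + i))))

lemma Mlist_succ {n : ℕ} (hn : n ≤ K) :
    Mlist K w c σ (n + 1) =
      (w (σ (K - n)), Real.exp (c (σ (K - n)))) :: Mlist K w c σ n := by
  unfold Mlist
  rw [List.range_succ_eq_map, List.map_cons, List.map_map]
  congr 1
  · have : K + 1 - (n + 1) + 0 = K - n := by omega
    rw [this]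
  · have hf : ((fun i => (w (σ (K + 1 - (n + 1) + i)), Real.exp (c (σ (K + 1 - (n + 1) + i)))))
        ∘ Nat.succ) = fun i => (w (σ (K + 1 - n + i)), Real.exp (c (σ (K + 1 - n + i)))) := by
      funext i
      rw [Function.comp_apply, show K + 1 - (n + 1) + Nat.succ i = K + 1 - n + i from by omega]
    rw [hf]

lemma Icc_insert {n : ℕ} (hn : n + 1 ≤ K) :
    Finset.Icc (K - n) K = insert (K - n) (Finset.Icc (K + 1 - n) K) := by
  ext j
  simp only [Finset.mem_Icc, Finset.mem_insert]
  omega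

lemma prodx_Mlist : ∀ n, n ≤ K →
    prodx (Mlist K w c σ n) = Real.exp (∑ k ∈ Finset.Icc (K + 1 - n) K, c (σ k)) := by
  intro n
  induction n with
  | zero =>
      intro _
      have : Finset.Icc (K + 1) K = ∅ := by
        apply Finset.Icc_eq_empty; omega
      simp [Mlist, prodx, this]
  | succ n ih =>
      intro hn
      have hn' : n ≤ K := by omega
      rw [show K + 1 - (n + 1) = K - n from by omega]
      rw [Mlist_succ K w c σ hn', prodx_cons, ih hn']
      rw [← Real.exp_add]
      congr 1
      rw [Icc_insert K hn, Finset.sum_insert (by simp [Finset.mem_Icc]; omega)]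

lemma T_aux : ∀ n, n ≤ K →
    (∑ s ∈ Finset.Icc (K + 1 - n) K,
        (w (σ s) - w (σ (s - 1))) * Real.exp (∑ k ∈ Finset.Icc s K, c (σ k)))
      = Vl (Mlist K w c σ n) + w (σ K)
        - w (σ (K - n)) * Real.exp (∑ k ∈ Finset.Icc (K + 1 - n) K, c (σ k)) := by
  intro n
  induction n with
  | zero =>
      intro _
      have h1 : Finset.Icc (K + 1) K = ∅ := by apply Finset.Icc_eq_empty; omega
      simp [Mlist, Vl, h1]
  | succ n ih =>
      intro hn
      have hn' : n ≤ K := by omega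
      have hKn : K + 1 - (n + 1) = K - n := by omega
      have hnm : K - n ∉ Finset.Icc (K + 1 - n) K := by simp [Finset.mem_Icc]; omega
      rw [hKn]
      simp only [Icc_insert K hn, Finset.sum_insert hnm]
      rw [ih hn', Mlist_succ K w c σ hn']
      simp only [Vl, prodx_Mlist K w c σ n hn', Real.exp_add]
      rw [show K - n - 1 = K - (n + 1) from by omega]
      ring

lemma RPerm_eq_Vl (hw0 : w (σ 0) = 0) :
    RPerm K w c σ =
      Vl ((List.range K).map fun i => (w (σ (i + 1)), Real.exp (c (σ (i + 1))))) := by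
  have h := T_aux K w c σ K (le_refl K)
  have h1 : K + 1 - K = 1 := by omega
  have h2 : K - K = 0 := by omega
  rw [h1, h2, hw0] at h
  have hM : Mlist K w c σ K =
      (List.range K).map fun i => (w (σ (i + 1)), Real.exp (c (σ (i + 1)))) := by
    unfold Mlist
    rw [h1]
    apply List.map_congr_left
    intro i _
    have : 1 + i = i + 1 := by omega
    rw [this]
  rw [RPerm, h, hM]
  ring

end Bridge

lemma image_lemma {K : ℕ} {τ : ℕ → ℕ} (hτ : Set.BijOn τ (Set.Icc 1 K) (Set.Icc 1 K)) (j : ℕ) :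
    (∃ i, i < K ∧ τ (i + 1) = j) ↔ 1 ≤ j ∧ j ≤ K := by
  constructor
  · rintro ⟨i, hi, rfl⟩
    have hmem : i + 1 ∈ Set.Icc 1 K := Set.mem_Icc.2 ⟨by omega, by omega⟩
    exact Set.mem_Icc.1 (hτ.mapsTo hmem)
  · rintro ⟨h1, h2⟩
    obtain ⟨s, hs, hsj⟩ := hτ.surjOn (Set.mem_Icc.2 ⟨h1, h2⟩)
    rw [Set.mem_Icc] at hs
    exact ⟨s - 1, by omega, by rw [show s - 1 + 1 = s by omega]; exact hsj⟩

lemma perm_lemma {K : ℕ} (F : ℕ → ℝ × ℝ) {τ τ' : ℕ → ℕ}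
    (hτ : Set.BijOn τ (Set.Icc 1 K) (Set.Icc 1 K))
    (hτ' : Set.BijOn τ' (Set.Icc 1 K) (Set.Icc 1 K)) :
    ((List.range K).map fun i => F (τ (i + 1))).Perm
      ((List.range K).map fun i => F (τ' (i + 1))) := by
  have key : ((List.range K).map fun i => τ (i + 1)).Perm
      ((List.range K).map fun i => τ' (i + 1)) := by
    apply List.perm_of_nodup_nodup_toFinset_eq
    · apply List.Nodup.map_on _ (List.nodup_range (n := K))
      intro x hx y hy hxy
      rw [List.mem_range] at hx hy
      have hx1 : x + 1 ∈ Set.Icc 1 K := Set.mem_Icc.2 ⟨by omega, by omega⟩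
      have hy1 : y + 1 ∈ Set.Icc 1 K := Set.mem_Icc.2 ⟨by omega, by omega⟩
      have := hτ.injOn hx1 hy1 hxy
      omega
    · apply List.Nodup.map_on _ (List.nodup_range (n := K))
      intro x hx y hy hxy
      rw [List.mem_range] at hx hy
      have hx1 : x + 1 ∈ Set.Icc 1 K := Set.mem_Icc.2 ⟨by omega, by omega⟩
      have hy1 : y + 1 ∈ Set.Icc 1 K := Set.mem_Icc.2 ⟨by omega, by omega⟩
      have := hτ'.injOn hx1 hy1 hxy
      omega
    · ext j
      simp only [List.mem_toFinset, List.mem_map, List.mem_range]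
      rw [show (∃ a, a < K ∧ τ (a + 1) = j) ↔ _ from image_lemma hτ j,
        show (∃ a, a < K ∧ τ' (a + 1) = j) ↔ _ from image_lemma hτ' j]
  have := key.map F
  simpa [List.map_map, Function.comp_def] using this

theorem stmt3 (K : ℕ) (hK : 2 ≤ K) (w : ℕ → ℝ) (hw0 : w 0 = 0) (hw : ∀ j, 0 ≤ w j)
    (σ σs : ℕ → ℕ) (hσ0 : σ 0 = 0) (hσs0 : σs 0 = 0)
    (hσ : Set.BijOn σ (Set.Icc 1 K) (Set.Icc 1 K))
    (hσs : Set.BijOn σs (Set.Icc 1 K) (Set.Icc 1 K))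
    (hsort : ∀ s t : ℕ, 1 ≤ s → s ≤ t → t ≤ K → w (σs s) ≤ w (σs t)) :
    (∀ c : ℕ → ℝ, (∀ j, 0 ≤ c j) → RPerm K w c σs ≤ RPerm K w c σ) ∧
    ∀ p : ℝ, {c : ℕ → ℝ | (∀ j, 0 ≤ c j) ∧ RPerm K w c σ ≤ p} ⊆
      {c : ℕ → ℝ | (∀ j, 0 ≤ c j) ∧ RPerm K w c σs ≤ p} := by
  have main : ∀ c : ℕ → ℝ, (∀ j, 0 ≤ c j) → RPerm K w c σs ≤ RPerm K w c σ := by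
    intro c hc
    rw [RPerm_eq_Vl K w c σ (by rw [hσ0]; exact hw0),
      RPerm_eq_Vl K w c σs (by rw [hσs0]; exact hw0)]
    apply Vl_sorted_le
    · exact perm_lemma (fun j => (w j, Real.exp (c j))) hσs hσ
    · intro p hp
      simp only [List.mem_map, List.mem_range] at hp
      obtain ⟨i, _, rfl⟩ := hp
      exact ⟨hw _, Real.one_le_exp (hc _)⟩
    · rw [List.pairwise_map]
      apply List.Pairwise.imp_of_mem ?_ (List.pairwise_lt_range (n := K))
      intro a b ha hb hab
      rw [List.mem_range] at ha hb
      exact hsort (a + 1) (b + 1) (by omega) (by omega) (by omega)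
  refine ⟨main, fun p c hc => ⟨hc.1, le_trans (main c hc.1) hc.2⟩⟩
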